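/- Let n ≥ 3 be an integer. The function a ↦ S(a) = cosh(a) · ∫_1^∞ (t^{2n−2} − 1)^{−1/2} · (cosh²(a)·t² − 1)^{−1/2} dt is strictly decreasing on (0, ∞); equivalently, since d = cosh^{n−1}(a) is a strictly increasing function of a > 0, the height 2·S of the family of translation-invariant minimal hypersurfaces M_d is a strictly decreasing function of the parameter d > 1. -/

import Mathlib

open MeasureTheory Set Real

/-- `S n a = cosh(a) · ∫_1^∞ (t^{2n−2} − 1)^{-1/2} (cosh²(a)·t² − 1)^{-1/2} dt`. -/
noncomputable def S (n : ℕ) (a : ℝ) : ℝ :=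
  Real.cosh a *
    ∫ t in Set.Ioi (1 : ℝ),
      (t ^ (2 * n - 2) - 1) ^ (-(1 : ℝ) / 2) *
        (Real.cosh a ^ 2 * t ^ 2 - 1) ^ (-(1 : ℝ) / 2)

namespace SAux

noncomputable def g (n : ℕ) (c t : ℝ) : ℝ :=
  (Real.sqrt (t ^ (2 * n - 2) - 1))⁻¹ * (Real.sqrt (c ^ 2 * t ^ 2 - 1))⁻¹

lemma rpow_neg_half (X : ℝ) (hX : 0 ≤ X) : X ^ (-(1 : ℝ) / 2) = (Real.sqrt X)⁻¹ := by
  rw [show -(1 : ℝ) / 2 = -(1 / 2) by ring, Real.rpow_neg hX, ← Real.sqrt_eq_rpow]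

lemma pow_sub_pos {n : ℕ} (hn : 3 ≤ n) {t : ℝ} (ht : 1 < t) : 0 < t ^ (2 * n - 2) - 1 := by
  have : 1 < t ^ (2 * n - 2) := one_lt_pow₀ ht (by omega)
  linarith

lemma quad_pos {c t : ℝ} (hc : 1 ≤ c) (ht : 1 < t) : 0 < c ^ 2 * t ^ 2 - 1 := by
  have h1 : 1 ≤ c ^ 2 := one_le_pow₀ hc
  have h2 : 1 < t ^ 2 := one_lt_pow₀ ht (by norm_num)
  nlinarith

lemma g_pos {n : ℕ} (hn : 3 ≤ n) {c t : ℝ} (hc : 1 ≤ c) (ht : 1 < t) : 0 < g n c t := by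
  have h1 := pow_sub_pos hn ht
  have h2 := quad_pos hc ht
  exact mul_pos (inv_pos.mpr (Real.sqrt_pos.mpr h1)) (inv_pos.mpr (Real.sqrt_pos.mpr h2))

lemma S_eq {n : ℕ} (hn : 3 ≤ n) (a : ℝ) :
    S n a = ∫ t in Set.Ioi (1 : ℝ), Real.cosh a * g n (Real.cosh a) t := by
  rw [S, ← MeasureTheory.integral_const_mul]
  refine MeasureTheory.setIntegral_congr_fun measurableSet_Ioi (fun t ht => ?_)
  have h1 := pow_sub_pos hn ht
  have h2 := quad_pos (Real.one_le_cosh a) ht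
  rw [g, rpow_neg_half _ h1.le, rpow_neg_half _ h2.le]

lemma continuousOn_g {n : ℕ} (hn : 3 ≤ n) {c : ℝ} (hc : 1 ≤ c) :
    ContinuousOn (g n c) (Set.Ioi (1 : ℝ)) := by
  apply ContinuousOn.mul
  · exact ((Real.continuous_sqrt.comp (by continuity)).continuousOn).inv₀
      (fun t ht => (Real.sqrt_pos.mpr (pow_sub_pos hn ht)).ne')
  · exact ((Real.continuous_sqrt.comp (by continuity)).continuousOn).inv₀
      (fun t ht => (Real.sqrt_pos.mpr (quad_pos hc ht)).ne')

/-- If `s * s ≤ 2 * X` with `s > 0`, then `(√X)⁻¹ ≤ √2 * s⁻¹`. -/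
lemma inv_sqrt_le {X s : ℝ} (hs : 0 < s) (h : s * s ≤ 2 * X) :
    (Real.sqrt X)⁻¹ ≤ Real.sqrt 2 * s⁻¹ := by
  have hX : 0 < X := by nlinarith
  have h2 : (0:ℝ) < Real.sqrt 2 := Real.sqrt_pos.mpr (by norm_num)
  have h1 : s / Real.sqrt 2 ≤ Real.sqrt X := by
    rw [Real.le_sqrt (by positivity) hX.le, div_pow, Real.sq_sqrt (by norm_num : (0:ℝ) ≤ 2),
      div_le_iff₀ (by norm_num : (0:ℝ) < 2)]
    nlinarith
  calc (Real.sqrt X)⁻¹ ≤ (s / Real.sqrt 2)⁻¹ := inv_anti₀ (by positivity) h1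
    _ = Real.sqrt 2 * s⁻¹ := by field_simp
      

lemma integrableOn_g {n : ℕ} (hn : 3 ≤ n) {c : ℝ} (hc : 1 < c) :
    IntegrableOn (g n c) (Set.Ioi (1 : ℝ)) := by
  have hsplit : Set.Ioc (1:ℝ) 2 ∪ Set.Ioi 2 = Set.Ioi 1 :=
    Set.Ioc_union_Ioi_eq_Ioi (by norm_num)
  rw [← hsplit]
  apply MeasureTheory.IntegrableOn.union
  · -- on Ioc 1 2
    have hM : (0:ℝ) < Real.sqrt (c ^ 2 - 1) := Real.sqrt_pos.mpr (by nlinarith)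
    have hbd : IntegrableOn (fun t : ℝ => (Real.sqrt (c^2-1))⁻¹ * (t - 1) ^ (-(1:ℝ)/2))
        (Set.Ioc (1:ℝ) 2) := by
      apply Integrable.const_mul
      have h := (intervalIntegral.intervalIntegrable_rpow' (r := (-(1:ℝ)/2))
        (by norm_num) (a := 0) (b := 1)).comp_sub_right 1
      rw [intervalIntegrable_iff_integrableOn_Ioc_of_le (by norm_num)] at h
      norm_num at h ⊢
      exact h
    have hmeas : AEStronglyMeasurable (g n c) (volume.restrict (Set.Ioc (1:ℝ) 2)) :=
      ((continuousOn_g hn hc.le).mono Set.Ioc_subset_Ioi_self).aestronglyMeasurable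
        measurableSet_Ioc
    apply hbd.mono' hmeas
    filter_upwards [ae_restrict_mem measurableSet_Ioc] with t ht
    have ht1 : 1 < t := ht.1
    have h1 := pow_sub_pos hn ht1
    have h2 := quad_pos hc.le ht1
    rw [Real.norm_eq_abs, abs_of_nonneg (g_pos hn hc.le ht1).le]
    have e1 : (Real.sqrt (t ^ (2*n-2) - 1))⁻¹ ≤ (t - 1) ^ (-(1:ℝ)/2) := by
      rw [rpow_neg_half _ (by linarith)]
      apply inv_anti₀ (Real.sqrt_pos.mpr (by linarith))
      apply Real.sqrt_le_sqrt
      have : t ≤ t ^ (2*n-2) := by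
        calc t = t ^ 1 := (pow_one t).symm
        _ ≤ t ^ (2*n-2) := pow_le_pow_right₀ ht1.le (by omega)
      linarith
    have e2 : (Real.sqrt (c ^ 2 * t ^ 2 - 1))⁻¹ ≤ (Real.sqrt (c^2-1))⁻¹ := by
      apply inv_anti₀ hM
      apply Real.sqrt_le_sqrt
      have : (0:ℝ) ≤ t^2 - 1 := by nlinarith
      nlinarith [mul_nonneg (sq_nonneg c) this]
    calc g n c t ≤ (t-1) ^ (-(1:ℝ)/2) * (Real.sqrt (c^2-1))⁻¹ :=
          mul_le_mul e1 e2 (inv_nonneg.mpr (Real.sqrt_nonneg _))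
            (Real.rpow_nonneg (by linarith) _)
      _ = (Real.sqrt (c^2-1))⁻¹ * (t-1) ^ (-(1:ℝ)/2) := mul_comm _ _
  · -- on Ioi 2
    have hbd : IntegrableOn (fun t : ℝ => 2 * t ^ (-(n:ℝ))) (Set.Ioi (2:ℝ)) := by
      apply Integrable.const_mul
      exact integrableOn_Ioi_rpow_of_lt
        (neg_lt_neg (show (1:ℝ) < n by exact_mod_cast (by omega : 1 < n))) (by norm_num)
    have hmeas : AEStronglyMeasurable (g n c) (volume.restrict (Set.Ioi (2:ℝ))) :=
      ((continuousOn_g hn hc.le).mono (fun x (hx : x ∈ Set.Ioi (2:ℝ)) => show x ∈ Set.Ioi (1:ℝ) from lt_trans (one_lt_two : (1:ℝ) < 2) hx)).aestronglyMeasurable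
        measurableSet_Ioi
    apply hbd.mono' hmeas
    filter_upwards [ae_restrict_mem measurableSet_Ioi] with t ht
    have ht2 : (2:ℝ) < t := ht
    have ht1 : (1:ℝ) < t := by linarith
    have ht0 : (0:ℝ) < t := by linarith
    rw [Real.norm_eq_abs, abs_of_nonneg (g_pos hn hc.le ht1).le]
    have hp : (0:ℝ) < t ^ (n-1) := pow_pos ht0 _
    have key1 : t ^ (n-1) * t ^ (n-1) ≤ 2 * (t ^ (2*n-2) - 1) := by
      have h2n : t ^ (n-1) * t ^ (n-1) = t ^ (2*n-2) := by
        rw [← pow_add]; congr 1; omega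
      have : (2:ℝ) ≤ t ^ (2*n-2) := by
        calc (2:ℝ) ≤ t := ht2.le
        _ = t ^ 1 := (pow_one t).symm
        _ ≤ t ^ (2*n-2) := pow_le_pow_right₀ ht1.le (by omega)
      linarith [h2n.le, h2n.ge]
    have key2 : t * t ≤ 2 * (c ^ 2 * t ^ 2 - 1) := by
      have h1 : 1 ≤ c ^ 2 := one_le_pow₀ hc.le
      nlinarith
    have e1 := inv_sqrt_le hp key1
    have e2 := inv_sqrt_le ht0 key2
    calc g n c t
        ≤ (Real.sqrt 2 * (t ^ (n-1))⁻¹) * (Real.sqrt 2 * t⁻¹) :=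
          mul_le_mul e1 e2 (inv_nonneg.mpr (Real.sqrt_nonneg _)) (by positivity)
      _ = (Real.sqrt 2 * Real.sqrt 2) * (t ^ (n-1) * t)⁻¹ := by
          rw [mul_inv]; ring
      _ = 2 * (t ^ n)⁻¹ := by
          rw [Real.mul_self_sqrt (by norm_num : (0:ℝ) ≤ 2), ← pow_succ,
            show n - 1 + 1 = n from by omega]
      _ = 2 * t ^ (-(n:ℝ)) := by
          rw [Real.rpow_neg ht0.le, Real.rpow_natCast]

/-- Pointwise strict monotonicity: for fixed `t > 1`,
`c ↦ c * (√(c²t²−1))⁻¹` is strictly decreasing for `c ≥ 1`. -/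
lemma pointwise_lt {n : ℕ} (hn : 3 ≤ n) {c₁ c₂ t : ℝ} (hc₁ : 1 ≤ c₁) (hcc : c₁ < c₂)
    (ht : 1 < t) : c₂ * g n c₂ t < c₁ * g n c₁ t := by
  have hc₂ : 1 ≤ c₂ := hc₁.trans hcc.le
  have h1 := pow_sub_pos hn ht
  have hX₁ := quad_pos hc₁ ht
  have hX₂ := quad_pos hc₂ ht
  set s₁ := Real.sqrt (c₁ ^ 2 * t ^ 2 - 1) with hs₁def
  set s₂ := Real.sqrt (c₂ ^ 2 * t ^ 2 - 1) with hs₂def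
  have hs₁ : 0 < s₁ := Real.sqrt_pos.mpr hX₁
  have hs₂ : 0 < s₂ := Real.sqrt_pos.mpr hX₂
  have hs₁sq : s₁ ^ 2 = c₁ ^ 2 * t ^ 2 - 1 := Real.sq_sqrt hX₁.le
  have hs₂sq : s₂ ^ 2 = c₂ ^ 2 * t ^ 2 - 1 := Real.sq_sqrt hX₂.le
  have hinv : (0:ℝ) < (Real.sqrt (t ^ (2*n-2) - 1))⁻¹ :=
    inv_pos.mpr (Real.sqrt_pos.mpr h1)
  rw [g, g]
  have hmul : c₂ * s₁ < c₁ * s₂ := by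
    have hsq : (c₂ * s₁) ^ 2 < (c₁ * s₂) ^ 2 := by
      have hd : 0 < c₂ ^ 2 - c₁ ^ 2 := by nlinarith
      have e1 : (c₂ * s₁) ^ 2 = c₂ ^ 2 * (c₁ ^ 2 * t ^ 2 - 1) := by
        rw [mul_pow, hs₁sq]
      have e2 : (c₁ * s₂) ^ 2 = c₁ ^ 2 * (c₂ ^ 2 * t ^ 2 - 1) := by
        rw [mul_pow, hs₂sq]
      rw [e1, e2]; nlinarith
    exact lt_of_pow_lt_pow_left₀ 2 (by positivity) hsq
  have key : c₂ * s₂⁻¹ < c₁ * s₁⁻¹ := by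
    have := (div_lt_div_iff₀ hs₂ hs₁).mpr hmul
    simpa [div_eq_mul_inv] using this
  calc c₂ * ((Real.sqrt (t ^ (2*n-2) - 1))⁻¹ * s₂⁻¹)
      = (Real.sqrt (t ^ (2*n-2) - 1))⁻¹ * (c₂ * s₂⁻¹) := by ring
    _ < (Real.sqrt (t ^ (2*n-2) - 1))⁻¹ * (c₁ * s₁⁻¹) := by
        exact mul_lt_mul_of_pos_left key hinv
    _ = c₁ * ((Real.sqrt (t ^ (2*n-2) - 1))⁻¹ * s₁⁻¹) := by ring

end SAux

/-- For `n ≥ 3`, the height `2·S(a)` of the translation-invariant minimal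
hypersurface is strictly decreasing in `a` on `(0, ∞)`; since
`d = cosh^{n−1}(a)` is strictly increasing in `a > 0`, the height is a strictly
decreasing function of the parameter `d > 1`. -/
theorem S_strictAnti (n : ℕ) (hn : 3 ≤ n) :
    StrictAntiOn (fun a : ℝ => 2 * S n a) (Set.Ioi (0 : ℝ)) ∧
      StrictMonoOn (fun a : ℝ => Real.cosh a ^ (n - 1)) (Set.Ioi (0 : ℝ)) := by
  constructor
  · intro a ha b hb hab
    simp only
    have ha' : (0:ℝ) < a := ha
    have hb' : (0:ℝ) < b := hb
    have hc₁ : 1 < Real.cosh a := by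
      rw [Real.one_lt_cosh]; exact ha'.ne'
    have hcc : Real.cosh a < Real.cosh b := by
      rw [Real.cosh_lt_cosh, abs_of_pos ha', abs_of_pos hb']; exact hab
    set c₁ := Real.cosh a
    set c₂ := Real.cosh b
    have hi₁ : IntegrableOn (fun t => c₁ * SAux.g n c₁ t) (Set.Ioi (1:ℝ)) :=
      (SAux.integrableOn_g hn hc₁).const_mul c₁
    have hi₂ : IntegrableOn (fun t => c₂ * SAux.g n c₂ t) (Set.Ioi (1:ℝ)) :=
      (SAux.integrableOn_g hn (hc₁.trans hcc)).const_mul c₂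
    have hdiff : IntegrableOn
        (fun t => c₁ * SAux.g n c₁ t - c₂ * SAux.g n c₂ t) (Set.Ioi (1:ℝ)) := hi₁.sub hi₂
    have hae : 0 ≤ᶠ[ae (volume.restrict (Set.Ioi (1:ℝ)))]
        fun t => c₁ * SAux.g n c₁ t - c₂ * SAux.g n c₂ t := by
      filter_upwards [ae_restrict_mem measurableSet_Ioi] with t ht
      have := SAux.pointwise_lt hn hc₁.le hcc ht
      simp only [Pi.zero_apply]
      linarith
    have hpos : 0 < ∫ t in Set.Ioi (1:ℝ), (c₁ * SAux.g n c₁ t - c₂ * SAux.g n c₂ t) := by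
      rw [MeasureTheory.setIntegral_pos_iff_support_of_nonneg_ae hae hdiff]
      have hsub : Set.Ioi (1:ℝ) ⊆ Function.support
          (fun t => c₁ * SAux.g n c₁ t - c₂ * SAux.g n c₂ t) := by
        intro t ht
        have := SAux.pointwise_lt hn hc₁.le hcc ht
        simp only [Function.mem_support]
        intro h
        rw [sub_eq_zero] at h
        exact absurd h.symm this.ne
      calc (0:ENNReal) < volume (Set.Ioi (1:ℝ)) := by simp
        _ ≤ volume (Function.support
            (fun t => c₁ * SAux.g n c₁ t - c₂ * SAux.g n c₂ t) ∩ Set.Ioi 1) := by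
          apply measure_mono
          exact fun x hx => ⟨hsub hx, hx⟩
    have hlt : S n b < S n a := by
      rw [SAux.S_eq hn a, SAux.S_eq hn b]
      rw [MeasureTheory.integral_sub hi₁ hi₂] at hpos
      linarith
    linarith
  · intro a ha b hb hab
    simp only
    have hcc : Real.cosh a < Real.cosh b := by
      rw [Real.cosh_lt_cosh, abs_of_pos ha, abs_of_pos hb]; exact hab
    exact pow_lt_pow_left₀ hcc (Real.cosh_pos a).le (by omega)
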